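/- For real numbers s, t with s,t ≥ 1, the 2×2 symmetric matrix with diagonal entries σ(s,t) = (s+1)(t²(st+2s−1)+s(st−2t−1)) and σ(t,s), and off-diagonal entries τ(s,t) = (s+t)^{3/2}(st−1)√((s+1)(t+1)), is positive semidefinite; i.e., σ(s,t) ≥ 0, σ(t,s) ≥ 0 and σ(s,t)σ(t,s) ≥ τ(s,t)². -/

import Mathlib

open Matrix

noncomputable def sigmaGQ (s t : ℝ) : ℝ :=
  (s + 1) * (t ^ 2 * (s * t + 2 * s - 1) + s * (s * t - 2 * t - 1))

noncomputable def tauGQ (s t : ℝ) : ℝ :=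
  Real.sqrt ((s + t) ^ 3) * (s * t - 1) * Real.sqrt ((s + 1) * (t + 1))

lemma sigmaGQ_expand (a b : ℝ) :
    sigmaGQ (a + 1) (b + 1) =
      8*b + 8*b^2 + 2*b^3 + 4*a + 18*a*b + 14*a*b^2 + 3*a*b^3 + 4*a^2 + 9*a^2*b
        + 5*a^2*b^2 + a^2*b^3 + a^3 + a^3*b := by
  unfold sigmaGQ; ring

lemma sigmaGQ_nonneg {s t : ℝ} (hs : 1 ≤ s) (ht : 1 ≤ t) : 0 ≤ sigmaGQ s t := by
  have h : s = (s - 1) + 1 := by ring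
  have h' : t = (t - 1) + 1 := by ring
  rw [h, h', sigmaGQ_expand]
  have ha : (0:ℝ) ≤ s - 1 := by linarith
  have hb : (0:ℝ) ≤ t - 1 := by linarith
  positivity

lemma key_ineq {s t : ℝ} (hs : 1 ≤ s) (ht : 1 ≤ t) :
    (s + t) ^ 3 * (s * t - 1) ^ 2 * ((s + 1) * (t + 1)) ≤ sigmaGQ s t * sigmaGQ t s := by
  have ha : (0:ℝ) ≤ s - 1 := by linarith
  have hb : (0:ℝ) ≤ t - 1 := by linarith
  set a := s - 1 with haa
  set b := t - 1 with hbb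
  have h : sigmaGQ s t * sigmaGQ t s - (s + t) ^ 3 * (s * t - 1) ^ 2 * ((s + 1) * (t + 1)) =
      16*a*b + 40*a*b^2 + 36*a*b^3 + 14*a*b^4 + 2*a*b^5 + 40*a^2*b + 108*a^2*b^2
      + 106*a^2*b^3 + 45*a^2*b^4 + 7*a^2*b^5 + 36*a^3*b + 106*a^3*b^2 + 114*a^3*b^3
      + 53*a^3*b^4 + 9*a^3*b^5 + 14*a^4*b + 45*a^4*b^2 + 53*a^4*b^3 + 27*a^4*b^4
      + 5*a^4*b^5 + 2*a^5*b + 7*a^5*b^2 + 9*a^5*b^3 + 5*a^5*b^4 + a^5*b^5 := by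
    unfold sigmaGQ
    have hsa : s = a + 1 := by rw [haa]; ring
    have htb : t = b + 1 := by rw [hbb]; ring
    rw [hsa, htb]; ring
  have hP : (0:ℝ) ≤ 16*a*b + 40*a*b^2 + 36*a*b^3 + 14*a*b^4 + 2*a*b^5 + 40*a^2*b + 108*a^2*b^2
      + 106*a^2*b^3 + 45*a^2*b^4 + 7*a^2*b^5 + 36*a^3*b + 106*a^3*b^2 + 114*a^3*b^3
      + 53*a^3*b^4 + 9*a^3*b^5 + 14*a^4*b + 45*a^4*b^2 + 53*a^4*b^3 + 27*a^4*b^4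
      + 5*a^4*b^5 + 2*a^5*b + 7*a^5*b^2 + 9*a^5*b^3 + 5*a^5*b^4 + a^5*b^5 := by positivity
  linarith

lemma tauGQ_sq {s t : ℝ} (hs : 1 ≤ s) (ht : 1 ≤ t) :
    tauGQ s t ^ 2 = (s + t) ^ 3 * (s * t - 1) ^ 2 * ((s + 1) * (t + 1)) := by
  have h1 : (0:ℝ) ≤ (s + t) ^ 3 := by positivity
  have h2 : (0:ℝ) ≤ (s + 1) * (t + 1) := by nlinarith
  unfold tauGQ
  rw [mul_pow, mul_pow, Real.sq_sqrt h1, Real.sq_sqrt h2]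
  try ring

lemma psd_two {a b d : ℝ} (ha : 0 ≤ a) (hd : 0 ≤ d) (hb : b ^ 2 ≤ a * d) :
    (!![a, b; b, d] : Matrix (Fin 2) (Fin 2) ℝ).PosSemidef := by
  rw [Matrix.posSemidef_iff_dotProduct_mulVec]
  constructor
  · ext i j
    fin_cases i <;> fin_cases j <;> simp [Matrix.conjTranspose_apply]
  · intro x
    have hx : (star x) ⬝ᵥ ((!![a, b; b, d] : Matrix (Fin 2) (Fin 2) ℝ).mulVec x)
        = a * (x 0)^2 + 2 * b * (x 0 * x 1) + d * (x 1)^2 := by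
      simp [Matrix.mulVec, dotProduct, Fin.sum_univ_two]
      ring
    rw [hx]
    rcases eq_or_lt_of_le ha with h0 | hpos
    · have hb0 : b = 0 := by nlinarith [sq_nonneg b]
      rw [← h0, hb0]
      nlinarith [sq_nonneg (x 1)]
    · have key : 0 ≤ a * (a * (x 0)^2 + 2 * b * (x 0 * x 1) + d * (x 1)^2) := by
        nlinarith [sq_nonneg (a * x 0 + b * x 1),
          mul_nonneg (sub_nonneg.2 hb) (sq_nonneg (x 1))]
      exact nonneg_of_mul_nonneg_right key hpos

theorem stmt_15 (s t : ℝ) (hs : 1 ≤ s) (ht : 1 ≤ t) :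
    (!![sigmaGQ s t, tauGQ s t; tauGQ s t, sigmaGQ t s]).PosSemidef ∧
    0 ≤ sigmaGQ s t ∧ 0 ≤ sigmaGQ t s ∧ tauGQ s t ^ 2 ≤ sigmaGQ s t * sigmaGQ t s := by
  have h1 := sigmaGQ_nonneg hs ht
  have h2 := sigmaGQ_nonneg ht hs
  have h3 : tauGQ s t ^ 2 ≤ sigmaGQ s t * sigmaGQ t s := by
    rw [tauGQ_sq hs ht]; exact key_ineq hs ht
  exact ⟨psd_two h1 h2 h3, h1, h2, h3⟩
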